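/- Let C be a well-powered category with small coproducts, wide pullbacks, and strong epi–mono factorizations, and let F : C ⥤ C preserve monomorphisms, intersections, and inverse images (pullbacks along monomorphisms). Let m : (R, r, i_R) ↪ (C, c, i_C) be a reachable pointed subcoalgebra of an I-pointed F-coalgebra (C, c, i_C) (i.e., m is a monomorphic homomorphism of I-pointed coalgebras and (R, r, i_R) is reachable). Then every homomorphism h : (S, s, i_S) → (C, c, i_C) of I-pointed coalgebras with (S, s, i_S) reachable factors uniquely through m via a homomorphism of I-pointed coalgebras; hence the reachable I-pointed coalgebras form a coreflective full subcategory of the category of I-pointed F-coalgebras. -/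

import Mathlib

open CategoryTheory CategoryTheory.Limits

universe w v u

variable {C : Type u} [Category.{v} C]

/-- A functor preserves monomorphisms. -/
def PreservesMonos (F : C ⥤ C) : Prop :=
  ∀ ⦃X Y : C⦄ (f : X ⟶ Y), Mono f → Mono (F.map f)

/-- The induced map on subobject lattices of a mono-preserving functor. -/
noncomputable def subMap {F : C ⥤ C} (hF : PreservesMonos F) {Y : C} (m : Subobject Y) :
    Subobject (F.obj Y) :=
  letI : Mono (F.map m.arrow) := hF m.arrow inferInstance
  Subobject.mk (F.map m.arrow)

/-- A mono-preserving functor preserves intersections if the induced maps on subobject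
lattices preserve arbitrary infima. -/
def PreservesIntersections [WellPowered.{v} C] [HasWidePullbacks.{v} C] {F : C ⥤ C}
    (hF : PreservesMonos F) : Prop :=
  ∀ ⦃Y : C⦄ (s : Set (Subobject Y)), subMap hF (sInf s) = sInf (subMap hF '' s)

/-- The "next time" operator of a morphism `f : X ⟶ F.obj Y`. -/
noncomputable def nextTime [HasPullbacks C] {F : C ⥤ C} (hF : PreservesMonos F)
    {X Y : C} (f : X ⟶ F.obj Y) (n : Subobject Y) : Subobject X :=
  (Subobject.pullback f).obj (subMap hF n)

/-- The "previous time" operator of a morphism `f : X ⟶ F.obj Y`: it sends a subobject `m` of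
`X` to the least subobject `n` of `Y` such that `m.arrow ≫ f` factors through `F.map n.arrow`. -/
noncomputable def prevTime [WellPowered.{v} C] [HasWidePullbacks.{v} C] (F : C ⥤ C)
    {X Y : C} (f : X ⟶ F.obj Y) (m : Subobject X) : Subobject Y :=
  sInf {n : Subobject Y | ∃ g : (m : C) ⟶ F.obj (n : C), g ≫ F.map n.arrow = m.arrow ≫ f}

/-- An `I`-pointed coalgebra `(X, c, i)` is reachable if every monomorphic homomorphism of
`I`-pointed coalgebras into it is an isomorphism. -/
def Reachable (F : C ⥤ C) {I X : C} (c : X ⟶ F.obj X) (i : I ⟶ X) : Prop :=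
  ∀ ⦃S : C⦄ (s : S ⟶ F.obj S) (iS : I ⟶ S) (m : S ⟶ X),
    Mono m → s ≫ F.map m = m ≫ c → iS ≫ m = i → IsIso m
/-- A functor preserves inverse images if it preserves pullback squares in which (at least)
one of the two morphisms being pulled back is a monomorphism. -/
def PreservesInverseImages (F : C ⥤ C) : Prop :=
  ∀ ⦃P X Y Z : C⦄ (fst : P ⟶ X) (snd : P ⟶ Y) (f : X ⟶ Z) (g : Y ⟶ Z), Mono g →
    IsPullback fst snd f g → IsPullback (F.map fst) (F.map snd) (F.map f) (F.map g)

/-- **The reachable part is a coreflection.**  If `F` preserves monomorphisms, intersections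
and inverse images, `m : (R, r, i_R) ↪ (X, c, i_C)` is a reachable pointed subcoalgebra, and
`h : (S, s, i_S) → (X, c, i_C)` is a homomorphism of `I`-pointed coalgebras with `(S, s, i_S)`
reachable, then `h` factors uniquely through `m` via a homomorphism of `I`-pointed
coalgebras; hence reachable `I`-pointed coalgebras form a coreflective full subcategory. -/
theorem reachable_part_coreflection
    [WellPowered.{v} C] [HasWidePullbacks.{v} C] [HasCoproducts.{v} C]
    [HasStrongEpiMonoFactorisations C]
    (F : C ⥤ C) (hF : PreservesMonos F) (hInt : PreservesIntersections hF)
    (hInv : PreservesInverseImages F)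
    {I X R S : C} (c : X ⟶ F.obj X) (i_C : I ⟶ X)
    (r : R ⟶ F.obj R) (i_R : I ⟶ R) (m : R ⟶ X) (hm : Mono m)
    (hm_coalg : r ≫ F.map m = m ≫ c) (hm_pt : i_R ≫ m = i_C)
    (hR_reach : Reachable F r i_R)
    (s : S ⟶ F.obj S) (i_S : I ⟶ S) (h : S ⟶ X)
    (hh_coalg : s ≫ F.map h = h ≫ c) (hh_pt : i_S ≫ h = i_C)
    (hS_reach : Reachable F s i_S) :
    ∃! k : S ⟶ R, (s ≫ F.map k = k ≫ r ∧ i_S ≫ k = i_R) ∧ k ≫ m = h := by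
  haveI := hm
  -- Pullback of h along m
  let P := pullback h m
  let fst : P ⟶ S := pullback.fst h m
  let snd : P ⟶ R := pullback.snd h m
  have hsq : fst ≫ h = snd ≫ m := pullback.condition
  haveI : Mono fst := inferInstanceAs (Mono (pullback.fst h m))
  -- F preserves this pullback
  have hFP : IsPullback (F.map fst) (F.map snd) (F.map h) (F.map m) :=
    hInv fst snd h m hm (IsPullback.of_hasPullback h m)
  -- Coalgebra structure on P
  have wP : (fst ≫ s) ≫ F.map h = (snd ≫ r) ≫ F.map m := by
    rw [Category.assoc, hh_coalg, Category.assoc, hm_coalg, ← Category.assoc, hsq,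
      Category.assoc]
  let p : P ⟶ F.obj P := hFP.lift (fst ≫ s) (snd ≫ r) wP
  have hp_fst : p ≫ F.map fst = fst ≫ s := hFP.lift_fst _ _ _
  have hp_snd : p ≫ F.map snd = snd ≫ r := hFP.lift_snd _ _ _
  -- Point on P
  have wI : i_S ≫ h = i_R ≫ m := by rw [hh_pt, hm_pt]
  let i_P : I ⟶ P := pullback.lift i_S i_R wI
  have hiP_fst : i_P ≫ fst = i_S := pullback.lift_fst _ _ _
  have hiP_snd : i_P ≫ snd = i_R := pullback.lift_snd _ _ _
  -- Reachability of S gives that fst is iso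
  haveI : IsIso fst := hS_reach p i_P fst inferInstance hp_fst hiP_fst
  refine ⟨inv fst ≫ snd, ⟨⟨?_, ?_⟩, ?_⟩, ?_⟩
  · -- coalgebra morphism condition; use mono F.map m
    haveI : Mono (F.map m) := hF m hm
    have h1 : inv fst ≫ snd ≫ m = h := by
      rw [← hsq, ← Category.assoc, IsIso.inv_hom_id, Category.id_comp]
    rw [← cancel_mono (F.map m)]
    simp only [Category.assoc, ← F.map_comp, hm_coalg]
    rw [h1, reassoc_of% h1, hh_coalg]
  · rw [← hiP_fst, ← hiP_snd]
    simp
  · rw [Category.assoc, ← hsq, ← Category.assoc, IsIso.inv_hom_id, Category.id_comp]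
  · intro k ⟨_, hk⟩
    rw [← cancel_mono m, hk, Category.assoc, ← hsq, ← Category.assoc, IsIso.inv_hom_id,
      Category.id_comp]
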